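/- Let X be a finite set with |X| = n and let 1 ≤ k ≤ n − 2. Then the dual of the combinatorial Grassmannian G(X,k) is isomorphic to the combinatorial Grassmannian G(X, n−k−1); an isomorphism is induced by set-theoretic complementation in X, sending a point A ∈ ℘_{k+1}(X) of G(X,k)° to X∖A ∈ ℘_{n−k−1}(X) and a line a ∈ ℘_k(X) of G(X,k)° to X∖a ∈ ℘_{n−k}(X). -/
import Mathlib


/-- An incidence structure: a set of points, a set of lines (inside ambient types
`P` and `L`), and an incidence relation. -/
structure IncStr (P : Type*) (L : Type*) where
  pts : Set P
  lns : Set L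
  inc : P → L → Prop

namespace IncStr

variable {P L P' L' : Type*}

/-- Incidence only relates points of the structure with lines of the structure. -/
def Proper (K : IncStr P L) : Prop :=
  ∀ p l, K.inc p l → p ∈ K.pts ∧ l ∈ K.lns

/-- A partial linear space: two distinct points incident with two lines force the
lines to coincide. -/
def IsPLS (K : IncStr P L) : Prop :=
  K.Proper ∧
    ∀ a b A B, a ≠ b → K.inc a A → K.inc b A → K.inc a B → K.inc b B → A = B

/-- A subspace: whenever two distinct points of `H` are incident with a line, every
point incident with that line belongs to `H`. -/
def IsSubspace (K : IncStr P L) (H : Set P) : Prop :=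
  H ⊆ K.pts ∧
    ∀ a b A, a ∈ H → b ∈ H → a ≠ b → K.inc a A → K.inc b A →
      ∀ x, K.inc x A → x ∈ H

/-- A hyperplane: a proper subspace met by every line. -/
def IsHyperplane (K : IncStr P L) (H : Set P) : Prop :=
  K.IsSubspace H ∧ H ≠ K.pts ∧ ∀ A ∈ K.lns, ∃ x ∈ H, K.inc x A

/-- `L[H]`: the lines all of whose incident points lie in `H`. -/
def linesIn (K : IncStr P L) (H : Set P) : Set L :=
  {A ∈ K.lns | ∀ x, K.inc x A → x ∈ H}

/-- The restriction `K↾H`. -/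
def restrict (K : IncStr P L) (H : Set P) : IncStr P L where
  pts := H
  lns := K.linesIn H
  inc := fun p l => K.inc p l ∧ p ∈ H ∧ l ∈ K.linesIn H

/-- The reduct `K∖H`. -/
def reduct (K : IncStr P L) (H : Set P) : IncStr P L where
  pts := K.pts \ H
  lns := K.lns \ K.linesIn H
  inc := fun p l => K.inc p l ∧ p ∈ K.pts \ H ∧ l ∈ K.lns \ K.linesIn H

/-- The dual structure `K°`. -/
def dual (K : IncStr P L) : IncStr L P where
  pts := K.lns
  lns := K.pts
  inc := fun l p => K.inc p l

/-- The join `K₁ ⋊_∞ K₂` determined by a map `f = ∞` from (the ambient type of)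
lines of `K₁` to points of `K₂`. -/
def join (K₁ K₂ : IncStr P L) (f : L → P) : IncStr P L where
  pts := K₁.pts ∪ K₂.pts
  lns := K₁.lns ∪ K₂.lns
  inc := fun p l => K₁.inc p l ∨ K₂.inc p l ∨ (l ∈ K₁.lns ∧ p = f l)

/-- Condition (∗): a point of `K₁` incident with two lines of `K₁` having the same
image under `∞` forces the lines to coincide. -/
def StarCond (K₁ : IncStr P L) (f : L → P) : Prop :=
  ∀ x A B, K₁.inc x A → K₁.inc x B → f A = f B → A = B

/-- The rank of a point: the number of lines incident with it. -/
noncomputable def pointRank (K : IncStr P L) (p : P) : ℕ :=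
  {l | K.inc p l}.ncard

/-- The size of a line: the number of points incident with it. -/
noncomputable def lineSize (K : IncStr P L) (l : L) : ℕ :=
  {p | K.inc p l}.ncard

/-- A finite `(ν_ρ, β_κ)`-configuration. -/
def IsConfig (K : IncStr P L) (ν ρ β κ : ℕ) : Prop :=
  K.pts.Finite ∧ K.lns.Finite ∧ K.IsPLS ∧
  K.pts.ncard = ν ∧ K.lns.ncard = β ∧
  (∀ p ∈ K.pts, K.pointRank p = ρ) ∧
  (∀ l ∈ K.lns, K.lineSize l = κ)

/-- A binomial configuration of type `B(k,m)`. -/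
def IsBinomial (K : IncStr P L) (k m : ℕ) : Prop :=
  K.IsConfig ((m + k - 1).choose k) k ((m + k - 1).choose m) m

/-- `(fp, fl)` is an isomorphism of incidence structures: a pair of bijections
(on points and on lines) preserving and reflecting incidence. -/
def IsIso (K : IncStr P L) (K' : IncStr P' L') (fp : P → P') (fl : L → L') : Prop :=
  Set.BijOn fp K.pts K'.pts ∧ Set.BijOn fl K.lns K'.lns ∧
    ∀ p ∈ K.pts, ∀ l ∈ K.lns, (K.inc p l ↔ K'.inc (fp p) (fl l))

def Isomorphic (K : IncStr P L) (K' : IncStr P' L') : Prop :=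
  ∃ fp fl, IsIso K K' fp fl

/-- A formally disjoint (tagged) copy of an incidence structure. -/
def tag (K : IncStr P L) (b : Bool) : IncStr (P × Bool) (L × Bool) where
  pts := (fun p => (p, b)) '' K.pts
  lns := (fun l => (l, b)) '' K.lns
  inc := fun p l => K.inc p.1 l.1 ∧ p.2 = b ∧ l.2 = b

end IncStr

/-- The combinatorial Grassmannian `G(Y,k) = ⟨℘_k(Y), ℘_{k+1}(Y), ⊂⟩`. -/
def Gras {α : Type*} (Y : Finset α) (k : ℕ) : IncStr (Finset α) (Finset α) where
  pts := {a : Finset α | a ⊆ Y ∧ a.card = k}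
  lns := {A : Finset α | A ⊆ Y ∧ A.card = k + 1}
  inc := fun a A => a ⊆ Y ∧ a.card = k ∧ A ⊆ Y ∧ A.card = k + 1 ∧ a ⊂ A

/-- The combinatorial Veronesian `V(Y,k)`: points are multisets of size `k` with
elements in `Y`, lines are multisets of size `< k` with elements in `Y`, a point `f`
is incident with a line `e` iff `f = e·x^{k-|e|}` for some `x ∈ Y`. -/
def Ver {α : Type*} (Y : Finset α) (k : ℕ) : IncStr (Multiset α) (Multiset α) where
  pts := {f : Multiset α | (∀ x ∈ f, x ∈ Y) ∧ Multiset.card f = k}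
  lns := {e : Multiset α | (∀ x ∈ e, x ∈ Y) ∧ Multiset.card e < k}
  inc := fun f e =>
    (∀ x ∈ f, x ∈ Y) ∧ Multiset.card f = k ∧
    (∀ x ∈ e, x ∈ Y) ∧ Multiset.card e < k ∧
    ∃ x ∈ Y, f = e + Multiset.replicate (k - Multiset.card e) x

/-- for `|X| = n` and `1 ≤ k ≤ n - 2`, set-theoretic complementation
in `X` (on points `A ∈ ℘_{k+1}(X)` of `G(X,k)°` and on lines `a ∈ ℘_k(X)` of
`G(X,k)°`) is an isomorphism of `G(X,k)°` onto `G(X, n-k-1)`. -/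
theorem statement16 {α : Type*} [Fintype α] [DecidableEq α] (n k : ℕ)
    (hn : Fintype.card α = n) (hk1 : 1 ≤ k) (hk2 : k ≤ n - 2) :
    IncStr.IsIso (Gras (Finset.univ : Finset α) k).dual
      (Gras (Finset.univ : Finset α) (n - k - 1))
      (fun A => Aᶜ) (fun a => aᶜ) := by
  have hkn : k + 2 ≤ n := by omega
  have hcard : ∀ a : Finset α, aᶜ.card = n - a.card := by
    intro a; rw [Finset.card_compl, hn]
  refine ⟨⟨?_, ?_, ?_⟩, ⟨?_, ?_, ?_⟩, ?_⟩
  · intro A hA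
    obtain ⟨-, hc⟩ := hA
    refine ⟨Finset.subset_univ _, ?_⟩
    rw [hcard, hc]; omega
  · intro A _ B _ h
    simpa using congrArg compl h
  · intro B hB
    obtain ⟨-, hc⟩ := hB
    refine ⟨Bᶜ, ⟨Finset.subset_univ _, ?_⟩, by simp⟩
    rw [hcard, hc]; omega
  · intro a ha
    obtain ⟨-, hc⟩ := ha
    refine ⟨Finset.subset_univ _, ?_⟩
    rw [hcard, hc]; omega
  · intro a _ b _ h
    simpa using congrArg compl h
  · intro b hb
    obtain ⟨-, hc⟩ := hb
    refine ⟨bᶜ, ⟨Finset.subset_univ _, ?_⟩, by simp⟩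
    rw [hcard, hc]; omega
  · intro A hA a ha
    obtain ⟨-, hA'⟩ := hA
    obtain ⟨-, ha'⟩ := ha
    constructor
    · rintro ⟨-, -, -, -, hss⟩
      refine ⟨Finset.subset_univ _, ?_, Finset.subset_univ _, ?_, ?_⟩
      · rw [hcard, hA']; omega
      · rw [hcard, ha']; omega
      · exact Finset.compl_ssubset_compl.mpr hss
    · rintro ⟨-, -, -, -, hss⟩
      exact ⟨Finset.subset_univ _, ha', Finset.subset_univ _, hA',
        Finset.compl_ssubset_compl.mp hss⟩
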